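/- Let B be a local ring and R a valuation subring of its residue field κ. Let A be the preimage of R under the quotient map B → κ, and declare an ideal of A admissible if it is generated by an element of A that is invertible in B. Then A is Φ-local: A is a local ring and every admissible ideal of A is invertible. -/

import Mathlib

open IsLocalRing

private lemma aux_isUnit_in_comap (B : Type*) [CommRing B] [IsLocalRing B]
    (R : Subring (ResidueField B))
    (a : ↥(R.comap (residue B)))
    (hu : IsUnit (a : B))
    (hinv : (residue B (a : B))⁻¹ ∈ R) : IsUnit a := by
  obtain ⟨u, hu⟩ := hu
  have h1 : (a : B) * ↑u⁻¹ = 1 := by rw [← hu]; exact u.mul_inv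
  have hres : residue B ((u⁻¹ : Bˣ) : B) = (residue B (a : B))⁻¹ := by
    have h2 : residue B (a : B) * residue B ((u⁻¹ : Bˣ) : B) = 1 := by
      rw [← map_mul, h1, map_one]
    exact eq_inv_of_mul_eq_one_right h2
  have hmem : ((u⁻¹ : Bˣ) : B) ∈ R.comap (residue B) := by
    simpa [Subring.mem_comap, hres] using hinv
  exact IsUnit.of_mul_eq_one (a := a) ⟨_, hmem⟩ (Subtype.ext h1)

theorem isPhiLocal_preimage_valuation_subring
    (B : Type*) [CommRing B] [IsLocalRing B]
    (R : Subring (IsLocalRing.ResidueField B))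
    (hR : ∀ x : IsLocalRing.ResidueField B, x ≠ 0 → x ∈ R ∨ x⁻¹ ∈ R) :
    IsLocalRing ↥(R.comap (IsLocalRing.residue B)) ∧
      ∀ I : Ideal ↥(R.comap (IsLocalRing.residue B)),
        (∃ a : ↥(R.comap (IsLocalRing.residue B)), IsUnit (a : B) ∧ I = Ideal.span {a}) →
        ∃ b : ↥(R.comap (IsLocalRing.residue B)),
          b ∈ nonZeroDivisors ↥(R.comap (IsLocalRing.residue B)) ∧ I = Ideal.span {b} := by
  have key : ∀ b : B, residue B b ≠ 0 → IsUnit b := by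
    intro b hb
    by_contra h
    exact hb (Ideal.Quotient.eq_zero_iff_mem.mpr ((mem_maximalIdeal b).mpr h))
  constructor
  · haveI : Nontrivial ↥(R.comap (residue B)) := by
      refine ⟨⟨0, 1, fun h => ?_⟩⟩
      exact zero_ne_one (congrArg Subtype.val h)
    refine IsLocalRing.of_isUnit_or_isUnit_one_sub_self ?_
    intro a
    set x : ResidueField B := residue B (a : B) with hx
    have hxR : x ∈ R := a.2
    have hsub : ((1 - a : ↥(R.comap (residue B))) : B) = 1 - (a : B) := rfl
    have hres_sub : residue B ((1 - a : ↥(R.comap (residue B))) : B) = 1 - x := by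
      rw [hsub, map_sub, map_one]
    by_cases h0 : x = 0
    · right
      refine aux_isUnit_in_comap B R _ (key _ ?_) ?_
      · rw [hres_sub, h0, sub_zero]; exact one_ne_zero
      · rw [hres_sub, h0, sub_zero, inv_one]; exact R.one_mem
    · by_cases h1 : x = 1
      · left
        refine aux_isUnit_in_comap B R _ (key _ h0) ?_
        rw [← hx, h1, inv_one]; exact R.one_mem
      · have h1' : (1 : ResidueField B) - x ≠ 0 := sub_ne_zero.mpr (Ne.symm h1)
        have ht : x⁻¹ * (1 - x) ≠ 0 := mul_ne_zero (inv_ne_zero h0) h1'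
        rcases hR _ ht with htR | htR
        · left
          refine aux_isUnit_in_comap B R _ (key _ h0) ?_
          have : x⁻¹ = x⁻¹ * (1 - x) + 1 := by field_simp; ring
          rw [← hx, this]
          exact R.add_mem htR R.one_mem
        · right
          refine aux_isUnit_in_comap B R _ (key _ ?_) ?_
          · rw [hres_sub]; exact h1'
          · have : (1 - x)⁻¹ = (x⁻¹ * (1 - x))⁻¹ + 1 := by field_simp; ring
            rw [hres_sub, this]
            exact R.add_mem htR R.one_mem
  · rintro I ⟨a, hu, rfl⟩
    refine ⟨a, mem_nonZeroDivisors_iff_right.mpr ?_, rfl⟩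
    intro y hy
    have hyB : (y : B) * (a : B) = 0 := congrArg Subtype.val hy
    have : (y : B) = 0 := by
      have h2 := congrArg (· * ((hu.unit⁻¹ : Bˣ) : B)) hyB
      simpa [mul_assoc, IsUnit.mul_val_inv] using h2
    exact Subtype.ext this
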